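/- Let ℓ,m ≥ 1 and let G=(V,E) be a digraph with a partition (V₀,V₁,…,V_k) such that: every induced subgraph of G[V₀] is in IO(m+1,ℓ+1), every induced subgraph of G[V_i] is in IO(m,ℓ) for 1 ≤ i < k, and G[V_k] ∈ IO(m,ℓ) when k ≥ 1. Then G ∈ IO(m+1,ℓ+1). -/

import Mathlib

/-- There is a directed path of length at most `n` from `x` to `y`. -/
def PathLe {V : Type*} (E : V → V → Prop) (n : ℕ) (x y : V) : Prop :=
  ∃ k ≤ n, ∃ f : ℕ → V, f 0 = x ∧ f k = y ∧ ∀ i < k, E (f i) (f (i + 1))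

/-- A directed path of length at most `n` from `x` to `y` all of whose vertices lie in `W`. -/
def PathLeIn {V : Type*} (E : V → V → Prop) (W : Set V) (n : ℕ) (x y : V) : Prop :=
  ∃ k ≤ n, ∃ f : ℕ → V, f 0 = x ∧ f k = y ∧ (∀ i ≤ k, f i ∈ W) ∧ ∀ i < k, E (f i) (f (i + 1))

/-- `A` spans no edges of `E` (in either direction). -/
def Indep {V : Type*} (E : V → V → Prop) (A : Set V) : Prop :=
  ∀ a ∈ A, ∀ b ∈ A, ¬ E a b

/-- The induced subgraph on `W` is in the class `O_n`: some independent set `A ⊆ W`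
reaches every vertex of `W` by a directed path of length at most `n` inside `W`. -/
def OutClass {V : Type*} (E : V → V → Prop) (n : ℕ) (W : Set V) : Prop :=
  ∃ A ⊆ W, Indep E A ∧ ∀ v ∈ W, ∃ a ∈ A, PathLeIn E W n a v

/-- The induced subgraph on `W` is in the class `I_n`: some independent set `A ⊆ W`
is reached from every vertex of `W` by a directed path of length at most `n` inside `W`. -/
def InClass {V : Type*} (E : V → V → Prop) (n : ℕ) (W : Set V) : Prop :=
  ∃ A ⊆ W, Indep E A ∧ ∀ v ∈ W, ∃ a ∈ A, PathLeIn E W n v a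

/-- The induced subgraph on `W` is in `IO(m, ℓ)`. -/
def IOClass {V : Type*} (E : V → V → Prop) (m ℓ : ℕ) (W : Set V) : Prop :=
  ∃ V₁ V₂ : Set V, V₁ ∪ V₂ = W ∧ Disjoint V₁ V₂ ∧ InClass E m V₁ ∧ OutClass E ℓ V₂

/-- `E` is a tournament: no loops and exactly one direction between distinct vertices. -/
def IsTournament {V : Type*} (E : V → V → Prop) : Prop :=
  (∀ x, ¬ E x x) ∧ ∀ x y, x ≠ y → (E x y ↔ ¬ E y x)

section helpers
variable {V : Type*} {E : V → V → Prop}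

lemma pathLeIn_mono {W W' : Set V} (h : W ⊆ W') {n : ℕ} {x y : V}
    (hp : PathLeIn E W n x y) : PathLeIn E W' n x y := by
  obtain ⟨c, hc, f, h0, h1, hW, hE⟩ := hp
  exact ⟨c, hc, f, h0, h1, fun i hi => h (hW i hi), hE⟩

lemma pathLeIn_le {W : Set V} {n n' : ℕ} (h : n ≤ n') {x y : V}
    (hp : PathLeIn E W n x y) : PathLeIn E W n' x y := by
  obtain ⟨c, hc, rest⟩ := hp; exact ⟨c, hc.trans h, rest⟩

lemma pathLeIn_single {W : Set V} {x y : V} (hx : x ∈ W) (hy : y ∈ W) (hxy : E x y)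
    {n : ℕ} (hn : 1 ≤ n) : PathLeIn E W n x y := by
  refine ⟨1, hn, fun i => if i = 0 then x else y, by simp, by simp, ?_, ?_⟩
  · intro i _
    by_cases h : i = 0 <;> simp [h, hx, hy]
  · intro i hi
    interval_cases i
    simpa using hxy

lemma pathLeIn_two {W : Set V} {x y z : V} (hx : x ∈ W) (hy : y ∈ W) (hz : z ∈ W)
    (h1 : E x y) (h2 : E y z) {n : ℕ} (hn : 2 ≤ n) : PathLeIn E W n x z := by
  refine ⟨2, hn, fun i => if i = 0 then x else if i = 1 then y else z, by simp, by simp, ?_, ?_⟩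
  · intro i _
    by_cases h : i = 0
    · simp [h, hx]
    · by_cases h' : i = 1 <;> simp [h, h', hy, hz]
  · intro i hi
    interval_cases i <;> simp [h1, h2]

lemma pathLeIn_snoc {W : Set V} {n : ℕ} {x y z : V}
    (hp : PathLeIn E W n x y) (hz : z ∈ W) (hyz : E y z) : PathLeIn E W (n + 1) x z := by
  obtain ⟨c, hc, f, h0, h1, hW, hE⟩ := hp
  refine ⟨c + 1, by omega, fun i => if i ≤ c then f i else z, by simp [h0], by simp, ?_, ?_⟩
  · intro i hi
    by_cases h : i ≤ c
    · simp [h, hW i h]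
    · simp [h, hz]
  · intro i hi
    by_cases h : i < c
    · have h1' : i ≤ c := by omega
      have h2' : i + 1 ≤ c := by omega
      simpa [h1', h2'] using hE i h
    · have hi' : i = c := by omega
      subst hi'
      have : ¬ (i + 1 ≤ i) := by omega
      simpa [this, h1] using hyz

lemma pathLeIn_cons {W : Set V} {n : ℕ} {x y z : V}
    (hx : x ∈ W) (hxy : E x y) (hp : PathLeIn E W n y z) : PathLeIn E W (n + 1) x z := by
  obtain ⟨c, hc, f, h0, h1, hW, hE⟩ := hp
  refine ⟨c + 1, by omega, fun i => if i = 0 then x else f (i - 1), by simp, by simp [h1], ?_, ?_⟩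
  · intro i _
    by_cases h : i = 0
    · simp [h, hx]
    · simp only [h, if_neg]
      exact hW _ (by omega)
  · intro i hi
    by_cases h : i = 0
    · subst h
      simpa [h0] using hxy
    · have h1' : i + 1 ≠ 0 := by omega
      simp only [h, h1', if_neg]
      have : i - 1 < c := by omega
      have := hE (i - 1) this
      have heq : i - 1 + 1 = i + 1 - 1 := by omega
      rwa [heq] at this

lemma absorbIn (E : V → V → Prop) (A : ℕ → Set V)
    (hind : ∀ j, Indep E (A j))
    (hcross : ∀ j j', j < j' → ∀ a ∈ A j, ∀ x ∈ A j', ¬ E a x) :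
    ∀ n, ∃ S : Set V, A 0 ⊆ S ∧ (∀ v ∈ S, ∃ j, j ≤ n ∧ v ∈ A j) ∧ Indep E S ∧
      ∀ j, j ≤ n → ∀ a ∈ A j, a ∈ S ∨ ∃ x ∈ S, E a x := by
  intro n
  induction n with
  | zero =>
    refine ⟨A 0, subset_rfl, fun v hv => ⟨0, le_refl _, hv⟩, hind 0, ?_⟩
    intro j hj a ha
    interval_cases j
    exact Or.inl ha
  | succ n ih =>
    obtain ⟨S, hS0, hSsub, hSind, habs⟩ := ih
    refine ⟨S ∪ {a | a ∈ A (n + 1) ∧ ∀ x ∈ S, ¬ E a x}, fun a ha => Or.inl (hS0 ha), ?_, ?_, ?_⟩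
    · rintro v (hv | hv)
      · obtain ⟨j, hj, hvj⟩ := hSsub v hv
        exact ⟨j, by omega, hvj⟩
      · exact ⟨n + 1, le_refl _, hv.1⟩
    · rintro a (ha | ha) b (hb | hb)
      · exact hSind a ha b hb
      · obtain ⟨j, hj, haj⟩ := hSsub a ha
        exact hcross j (n + 1) (by omega) a haj b hb.1
      · exact ha.2 b hb
      · exact hind (n + 1) a ha.1 b hb.1
    · intro j hj a ha
      by_cases h : j ≤ n
      · rcases habs j h a ha with h' | ⟨x, hx, hax⟩
        · exact Or.inl (Or.inl h')
        · exact Or.inr ⟨x, Or.inl hx, hax⟩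
      · have hj' : j = n + 1 := by omega
        subst hj'
        by_cases h' : ∀ x ∈ S, ¬ E a x
        · exact Or.inl (Or.inr ⟨ha, h'⟩)
        · push_neg at h'
          obtain ⟨x, hx, hax⟩ := h'
          exact Or.inr ⟨x, Or.inl hx, hax⟩

lemma absorbOut (E : V → V → Prop) (B : ℕ → Set V)
    (hind : ∀ j, Indep E (B j))
    (hcross : ∀ j j', j < j' → ∀ b ∈ B j, ∀ x ∈ B j', ¬ E x b) :
    ∀ n, ∃ S : Set V, B 0 ⊆ S ∧ (∀ v ∈ S, ∃ j, j ≤ n ∧ v ∈ B j) ∧ Indep E S ∧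
      ∀ j, j ≤ n → ∀ b ∈ B j, b ∈ S ∨ ∃ x ∈ S, E x b := by
  intro n
  obtain ⟨S, h1, h2, h3, h4⟩ :=
    absorbIn (fun x y => E y x) B (fun j a ha b hb => hind j b hb a ha)
      (fun j j' hjj b hb x hx => hcross j j' hjj b hb x hx) n
  exact ⟨S, h1, h2, fun a ha b hb => h3 b hb a ha, h4⟩

end helpers


/-- The invariant for the downward induction over parts `i, i+1, …, k`. -/
def Qprop {V : Type*} (E : V → V → Prop) (m ℓ k : ℕ) (P' : ℕ → Set V) (i : ℕ) : Prop :=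
  ∃ S₁ S₂ : Set V, ∃ A B : ℕ → Set V,
    (S₁ ∪ S₂ = {v | ∃ j, i ≤ j ∧ j ≤ k ∧ v ∈ P' j}) ∧
    Disjoint S₁ S₂ ∧
    (∀ j, A j ⊆ P' j ∩ S₁) ∧ (∀ j, B j ⊆ P' j ∩ S₂) ∧
    (∀ j, Indep E (A j)) ∧ (∀ j, Indep E (B j)) ∧
    (∀ j j', j < j' → ∀ a ∈ A j, ∀ x ∈ A j', ¬ E a x) ∧
    (∀ j j', j < j' → ∀ b ∈ B j, ∀ x ∈ B j', ¬ E x b) ∧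
    (∀ v ∈ S₁, ∃ j a, a ∈ A j ∧ PathLeIn E S₁ m v a) ∧
    (∀ v ∈ S₂, ∃ j b, b ∈ B j ∧ PathLeIn E S₂ ℓ b v)

lemma Qbase {V : Type*} {E : V → V → Prop} {m ℓ k : ℕ} {P' : ℕ → Set V}
    (hlast : IOClass E m ℓ (P' k)) : Qprop E m ℓ k P' k := by
  obtain ⟨X, Y, hXY, hdisj, ⟨Ak, hAk, hAkind, hAkcov⟩, ⟨Bk, hBk, hBkind, hBkcov⟩⟩ := hlast
  have hU : X ∪ Y = {v | ∃ j, k ≤ j ∧ j ≤ k ∧ v ∈ P' j} := by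
    rw [hXY]
    ext v
    constructor
    · intro hv; exact ⟨k, le_refl _, le_refl _, hv⟩
    · rintro ⟨j, hj1, hj2, hv⟩
      have : j = k := le_antisymm hj2 hj1
      rwa [this] at hv
  refine ⟨X, Y, (fun j => if j = k then Ak else ∅), (fun j => if j = k then Bk else ∅),
    hU, hdisj, ?_, ?_, ?_, ?_, ?_, ?_, ?_, ?_⟩
  · intro j
    by_cases h : j = k
    · subst h
      simp only [if_pos rfl]
      intro a ha
      exact ⟨(hXY ▸ Set.subset_union_left) (hAk ha), hAk ha⟩
    · simp [h]
  · intro j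
    by_cases h : j = k
    · subst h
      simp only [if_pos rfl]
      intro b hb
      exact ⟨(hXY ▸ Set.subset_union_right) (hBk hb), hBk hb⟩
    · simp [h]
  · intro j
    dsimp only
    by_cases h : j = k
    · rw [if_pos h]; exact hAkind
    · rw [if_neg h]; intro a ha; exact absurd ha (Set.notMem_empty a)
  · intro j
    dsimp only
    by_cases h : j = k
    · rw [if_pos h]; exact hBkind
    · rw [if_neg h]; intro b hb; exact absurd hb (Set.notMem_empty b)
  · intro j j' hjj a ha x hx
    by_cases h : j = k
    · have : j' ≠ k := by omega
      simp [this] at hx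
    · simp [h] at ha
  · intro j j' hjj b hb x hx
    by_cases h : j' = k
    · have : j ≠ k := by omega
      simp [this] at hb
    · simp [h] at hx
  · intro v hv
    obtain ⟨a, ha, hp⟩ := hAkcov v hv
    exact ⟨k, a, by simp [ha], hp⟩
  · intro v hv
    obtain ⟨b, hb, hp⟩ := hBkcov v hv
    exact ⟨k, b, by simp [hb], hp⟩

lemma Qstep {V : Type*} {E : V → V → Prop} {m ℓ k : ℕ} {P' : ℕ → Set V}
    (hm : 1 ≤ m) (hℓ : 1 ≤ ℓ)
    (hdisjP : ∀ j j', j ≠ j' → Disjoint (P' j) (P' j'))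
    (i : ℕ) (hik : i < k)
    (hher : ∀ W ⊆ P' i, IOClass E m ℓ W)
    (hQ : Qprop E m ℓ k P' (i + 1)) : Qprop E m ℓ k P' i := by
  obtain ⟨S₁, S₂, A, B, hUnion, hDisj, hA, hB, hAind, hBind, hAcross, hBcross, hAcov, hBcov⟩ := hQ
  have hmemU : ∀ v, v ∈ S₁ ∪ S₂ ↔ ∃ j, i + 1 ≤ j ∧ j ≤ k ∧ v ∈ P' j := fun v =>
    Set.ext_iff.mp hUnion v
  -- no vertex of `P' i` is already covered
  have hPi_not : ∀ v ∈ P' i, v ∉ S₁ ∪ S₂ := by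
    intro v hv hmem
    obtain ⟨j, hj1, hj2, hvj⟩ := (hmemU v).mp hmem
    exact Set.disjoint_left.mp (hdisjP i j (by omega)) hv hvj
  have hAem : ∀ j, j ≤ i → ∀ a ∈ A j, False := by
    intro j hj a ha
    obtain ⟨haP, haS⟩ := hA j ha
    obtain ⟨j', hj1, hj2, hvj⟩ := (hmemU a).mp (Or.inl haS)
    exact Set.disjoint_left.mp (hdisjP j j' (by omega)) haP hvj
  have hBem : ∀ j, j ≤ i → ∀ b ∈ B j, False := by
    intro j hj b hb
    obtain ⟨hbP, hbS⟩ := hB j hb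
    obtain ⟨j', hj1, hj2, hvj⟩ := (hmemU b).mp (Or.inr hbS)
    exact Set.disjoint_left.mp (hdisjP j j' (by omega)) hbP hvj
  set N : Set V := {v | v ∈ P' i ∧ ∃ a, (∃ j, a ∈ A j) ∧ E v a} with hN
  set M : Set V := {v | v ∈ P' i ∧ v ∉ N ∧ ∃ b, (∃ j, b ∈ B j) ∧ E b v} with hM
  set W : Set V := {v | v ∈ P' i ∧ v ∉ N ∧ v ∉ M} with hWdef
  have hWsub : W ⊆ P' i := fun v hv => hv.1
  obtain ⟨X, Y, hXY, hXYdisj, ⟨Ai, hAiX, hAiind, hAicov⟩, ⟨Bi, hBiY, hBiind, hBicov⟩⟩ :=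
    hher W hWsub
  have hXW : X ⊆ W := hXY ▸ Set.subset_union_left
  have hYW : Y ⊆ W := hXY ▸ Set.subset_union_right
  refine ⟨S₁ ∪ X ∪ N, S₂ ∪ Y ∪ M,
    (fun j => if j = i then Ai else A j), (fun j => if j = i then Bi else B j),
    ?_, ?_, ?_, ?_, ?_, ?_, ?_, ?_, ?_, ?_⟩
  -- union
  · ext v
    constructor
    · rintro (((hv | hv) | hv) | ((hv | hv) | hv))
      · obtain ⟨j, hj1, hj2, hvj⟩ := (hmemU v).mp (Or.inl hv)
        exact ⟨j, by omega, hj2, hvj⟩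
      · exact ⟨i, le_refl _, by omega, (hXW hv).1⟩
      · exact ⟨i, le_refl _, by omega, hv.1⟩
      · obtain ⟨j, hj1, hj2, hvj⟩ := (hmemU v).mp (Or.inr hv)
        exact ⟨j, by omega, hj2, hvj⟩
      · exact ⟨i, le_refl _, by omega, (hYW hv).1⟩
      · exact ⟨i, le_refl _, by omega, hv.1⟩
    · rintro ⟨j, hj1, hj2, hvj⟩
      rcases Nat.eq_or_lt_of_le hj1 with h | h
      · subst h
        by_cases hn : v ∈ N
        · exact Or.inl (Or.inr hn)
        · by_cases hmm : v ∈ M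
          · exact Or.inr (Or.inr hmm)
          · have hvW : v ∈ W := ⟨hvj, hn, hmm⟩
            rw [← hXY] at hvW
            rcases hvW with h | h
            · exact Or.inl (Or.inl (Or.inr h))
            · exact Or.inr (Or.inl (Or.inr h))
      · have : v ∈ S₁ ∪ S₂ := (hmemU v).mpr ⟨j, by omega, hj2, hvj⟩
        rcases this with h' | h'
        · exact Or.inl (Or.inl (Or.inl h'))
        · exact Or.inr (Or.inl (Or.inl h'))
  -- disjoint
  · rw [Set.disjoint_left]
    rintro v ((hv | hv) | hv) hv2
    · rcases hv2 with (h' | h') | h'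
      · exact Set.disjoint_left.mp hDisj hv h'
      · exact hPi_not v (hYW h').1 (Or.inl hv)
      · exact hPi_not v h'.1 (Or.inl hv)
    · rcases hv2 with (h' | h') | h'
      · exact hPi_not v (hXW hv).1 (Or.inr h')
      · exact Set.disjoint_left.mp hXYdisj hv h'
      · exact (hXW hv).2.2 h'
    · rcases hv2 with (h' | h') | h'
      · exact hPi_not v hv.1 (Or.inr h')
      · exact (hYW h').2.1 hv
      · exact h'.2.1 hv
  -- A j ⊆ P' j ∩ S₁'
  · intro j
    by_cases h : j = i
    · subst h
      simp only [if_pos rfl]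
      intro a ha
      exact ⟨(hXW (hAiX ha)).1, Or.inl (Or.inr (hAiX ha))⟩
    · simp only [if_neg h]
      intro a ha
      exact ⟨(hA j ha).1, Or.inl (Or.inl (hA j ha).2)⟩
  -- B j ⊆ P' j ∩ S₂'
  · intro j
    by_cases h : j = i
    · subst h
      simp only [if_pos rfl]
      intro b hb
      exact ⟨(hYW (hBiY hb)).1, Or.inl (Or.inr (hBiY hb))⟩
    · simp only [if_neg h]
      intro b hb
      exact ⟨(hB j hb).1, Or.inl (Or.inl (hB j hb).2)⟩
  -- Indep A
  · intro j
    dsimp only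
    by_cases h : j = i
    · rw [if_pos h]; exact hAiind
    · rw [if_neg h]; exact hAind j
  -- Indep B
  · intro j
    dsimp only
    by_cases h : j = i
    · rw [if_pos h]; exact hBiind
    · rw [if_neg h]; exact hBind j
  -- A cross
  · intro j j' hjj a ha x hx
    dsimp only at ha hx
    by_cases h : j = i
    · subst h
      rw [if_pos rfl] at ha
      have hj' : j' ≠ j := by omega
      rw [if_neg hj'] at hx
      have haW : a ∈ W := hXW (hAiX ha)
      intro hE
      exact haW.2.1 ⟨haW.1, x, ⟨j', hx⟩, hE⟩
    · rw [if_neg h] at ha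
      by_cases h' : j' = i
      · subst h'
        exact absurd (hAem j (by omega) a ha) (by simp)
      · rw [if_neg h'] at hx
        exact hAcross j j' hjj a ha x hx
  -- B cross
  · intro j j' hjj b hb x hx
    dsimp only at hb hx
    by_cases h : j = i
    · subst h
      rw [if_pos rfl] at hb
      have hj' : j' ≠ j := by omega
      rw [if_neg hj'] at hx
      have hbW : b ∈ W := hYW (hBiY hb)
      intro hE
      exact hbW.2.2 ⟨hbW.1, hbW.2.1, x, ⟨j', hx⟩, hE⟩
    · rw [if_neg h] at hb
      by_cases h' : j' = i
      · subst h'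
        exact absurd (hBem j (by omega) b hb) (by simp)
      · rw [if_neg h'] at hx
        exact hBcross j j' hjj b hb x hx
  -- In coverage
  · rintro v ((hv | hv) | hv)
    · obtain ⟨j, a, ha, hp⟩ := hAcov v hv
      have hj : j ≠ i := by
        intro h
        exact hAem j (by omega) a (h ▸ ha)
      exact ⟨j, a, by dsimp only; rw [if_neg hj]; exact ha,
        pathLeIn_mono (fun u hu => Or.inl (Or.inl hu)) hp⟩
    · obtain ⟨a, ha, hp⟩ := hAicov v hv
      exact ⟨i, a, by dsimp only; rw [if_pos rfl]; exact ha,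
        pathLeIn_mono (fun u hu => Or.inl (Or.inr hu)) hp⟩
    · have hv' : v ∈ N := hv
      obtain ⟨hvP, a, ⟨j, haj⟩, hE⟩ := hv
      have hj : j ≠ i := by
        intro h
        exact hAem j (by omega) a (by exact haj)
      refine ⟨j, a, by dsimp only; rw [if_neg hj]; exact haj, ?_⟩
      exact pathLeIn_single (show v ∈ S₁ ∪ X ∪ N from Or.inr hv') (show a ∈ S₁ ∪ X ∪ N from Or.inl (Or.inl (hA j haj).2)) hE hm
  -- Out coverage
  · rintro v ((hv | hv) | hv)
    · obtain ⟨j, b, hb, hp⟩ := hBcov v hv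
      have hj : j ≠ i := by
        intro h
        exact hBem j (by omega) b (h ▸ hb)
      exact ⟨j, b, by dsimp only; rw [if_neg hj]; exact hb,
        pathLeIn_mono (fun u hu => Or.inl (Or.inl hu)) hp⟩
    · obtain ⟨b, hb, hp⟩ := hBicov v hv
      exact ⟨i, b, by dsimp only; rw [if_pos rfl]; exact hb,
        pathLeIn_mono (fun u hu => Or.inl (Or.inr hu)) hp⟩
    · have hv' : v ∈ M := hv
      obtain ⟨hvP, hvN, b, ⟨j, hbj⟩, hE⟩ := hv
      have hj : j ≠ i := by
        intro h
        exact hBem j (by omega) b (by exact hbj)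
      refine ⟨j, b, by dsimp only; rw [if_neg hj]; exact hbj, ?_⟩
      exact pathLeIn_single (show b ∈ S₂ ∪ Y ∪ M from Or.inl (Or.inl (hB j hbj).2)) (show v ∈ S₂ ∪ Y ∪ M from Or.inr hv') hE hℓ


lemma Qall {V : Type*} {E : V → V → Prop} {m ℓ k : ℕ} {P' : ℕ → Set V}
    (hm : 1 ≤ m) (hℓ : 1 ≤ ℓ)
    (hdisjP : ∀ j j', j ≠ j' → Disjoint (P' j) (P' j'))
    (hmid' : ∀ i, 1 ≤ i → i < k → ∀ W ⊆ P' i, IOClass E m ℓ W)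
    (hlast : IOClass E m ℓ (P' k)) :
    ∀ t, t < k → Qprop E m ℓ k P' (k - t) := by
  intro t
  induction t with
  | zero =>
    intro _
    have h0 : k - 0 = k := by omega
    rw [h0]
    exact Qbase hlast
  | succ t ih =>
    intro h
    have h1 : k - t = (k - (t + 1)) + 1 := by omega
    have hq := ih (by omega)
    rw [h1] at hq
    exact Qstep hm hℓ hdisjP (k - (t + 1)) (by omega)
      (hmid' _ (by omega) (by omega)) hq

/-- Stepping-up theorem for the classes `IO(m, ℓ)`. -/
theorem stepping_up_inout {V : Type*} (E : V → V → Prop) (m ℓ k : ℕ)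
    (hm : 1 ≤ m) (hℓ : 1 ≤ ℓ)
    (P : Fin (k + 1) → Set V)
    (hcover : (⋃ i, P i) = Set.univ)
    (hdisj : ∀ i j, i ≠ j → Disjoint (P i) (P j))
    (h0 : ∀ W ⊆ P 0, IOClass E (m + 1) (ℓ + 1) W)
    (hmid : ∀ i : Fin (k + 1), 0 < (i : ℕ) → (i : ℕ) < k → ∀ W ⊆ P i, IOClass E m ℓ W)
    (hlast : 1 ≤ k → IOClass E m ℓ (P (Fin.last k))) :
    IOClass E (m + 1) (ℓ + 1) Set.univ := by
  rcases Nat.eq_zero_or_pos k with hk0 | hkpos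
  · subst hk0
    have huniv : Set.univ ⊆ P 0 := by
      intro v _
      have hv : v ∈ ⋃ i, P i := by rw [hcover]; trivial
      obtain ⟨j, hj⟩ := Set.mem_iUnion.mp hv
      have hj0 : j = 0 := by
        have := j.isLt
        exact Fin.ext (by omega)
      rwa [hj0] at hj
    exact h0 _ huniv
  -- main case : k ≥ 1
  set P' : ℕ → Set V := fun j => if h : j < k + 1 then P ⟨j, h⟩ else ∅ with hP'def
  have hP'eq : ∀ j (h : j < k + 1), P' j = P ⟨j, h⟩ := fun j h => dif_pos h
  have hP'emp : ∀ j, k < j → P' j = ∅ := fun j h => dif_neg (by omega)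
  have hP'0 : P' 0 = P 0 := by
    rw [hP'eq 0 (by omega)]
    congr 1
  have hdisjP' : ∀ j j', j ≠ j' → Disjoint (P' j) (P' j') := by
    intro j j' hne
    by_cases h : j < k + 1
    · by_cases h' : j' < k + 1
      · rw [hP'eq j h, hP'eq j' h']
        exact hdisj _ _ (Fin.ne_of_val_ne hne)
      · rw [hP'emp j' (by omega)]
        exact Set.disjoint_empty _
    · rw [hP'emp j (by omega)]
      exact Set.empty_disjoint _
  have hmid' : ∀ i, 1 ≤ i → i < k → ∀ W ⊆ P' i, IOClass E m ℓ W := by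
    intro i h1 h2 W hW
    rw [hP'eq i (by omega)] at hW
    exact hmid ⟨i, by omega⟩ h1 h2 W hW
  have hlast' : IOClass E m ℓ (P' k) := by
    rw [hP'eq k (by omega)]
    exact hlast hkpos
  have hcov' : ∀ v : V, ∃ j, j ≤ k ∧ v ∈ P' j := by
    intro v
    have hv : v ∈ ⋃ i, P i := by rw [hcover]; trivial
    obtain ⟨i, hi⟩ := Set.mem_iUnion.mp hv
    refine ⟨i.1, by omega, ?_⟩
    rw [hP'eq i.1 i.isLt]
    rwa [Fin.eta]
  have hQ1 : Qprop E m ℓ k P' 1 := by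
    have hq := Qall hm hℓ hdisjP' hmid' hlast' (k - 1) (by omega)
    have h : k - (k - 1) = 1 := by omega
    rwa [h] at hq
  obtain ⟨S₁, S₂, A, B, hUnion, hDisj, hA, hB, hAind, hBind, hAcross, hBcross, hAcov, hBcov⟩ := hQ1
  have hmemU : ∀ v, v ∈ S₁ ∪ S₂ ↔ ∃ j, 1 ≤ j ∧ j ≤ k ∧ v ∈ P' j := fun v =>
    Set.ext_iff.mp hUnion v
  have hP0_not : ∀ v ∈ P' 0, v ∉ S₁ ∪ S₂ := by
    intro v hv hmem
    obtain ⟨j, hj1, _, hvj⟩ := (hmemU v).mp hmem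
    exact Set.disjoint_left.mp (hdisjP' 0 j (by omega)) hv hvj
  have hAbound : ∀ j, ∀ a ∈ A j, 1 ≤ j ∧ j ≤ k := by
    intro j a ha
    obtain ⟨haP, haS⟩ := hA j ha
    constructor
    · by_contra h
      have hj0 : j = 0 := by omega
      subst hj0
      obtain ⟨j', hj1, _, hj'⟩ := (hmemU a).mp (Or.inl haS)
      exact Set.disjoint_left.mp (hdisjP' 0 j' (by omega)) haP hj'
    · by_contra h
      push_neg at h
      rw [hP'emp j h] at haP
      exact haP
  have hBbound : ∀ j, ∀ b ∈ B j, 1 ≤ j ∧ j ≤ k := by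
    intro j b hb
    obtain ⟨hbP, hbS⟩ := hB j hb
    constructor
    · by_contra h
      have hj0 : j = 0 := by omega
      subst hj0
      obtain ⟨j', hj1, _, hj'⟩ := (hmemU b).mp (Or.inr hbS)
      exact Set.disjoint_left.mp (hdisjP' 0 j' (by omega)) hbP hj'
    · by_contra h
      push_neg at h
      rw [hP'emp j h] at hbP
      exact hbP
  set N₀ : Set V := {v | v ∈ P' 0 ∧ ∃ a, (∃ j, a ∈ A j) ∧ E v a} with hN₀def
  set M₀ : Set V := {v | v ∈ P' 0 ∧ v ∉ N₀ ∧ ∃ b, (∃ j, b ∈ B j) ∧ E b v} with hM₀def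
  set W₀ : Set V := {v | v ∈ P' 0 ∧ v ∉ N₀ ∧ v ∉ M₀} with hW₀def
  have hW₀P : W₀ ⊆ P 0 := by
    intro v hv
    have h := hv.1
    rwa [hP'0] at h
  obtain ⟨X₀, Y₀, hXY₀, hXY₀disj, ⟨A₀, hA₀X, hA₀ind, hA₀cov⟩, ⟨B₀, hB₀Y, hB₀ind, hB₀cov⟩⟩ :=
    h0 W₀ hW₀P
  have hX₀W : X₀ ⊆ W₀ := hXY₀ ▸ Set.subset_union_left
  have hY₀W : Y₀ ⊆ W₀ := hXY₀ ▸ Set.subset_union_right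
  -- absorption for the In side
  obtain ⟨Astar, hAstar0, hAstarSub, hAstarInd, hAabs⟩ :=
    absorbIn E (fun j => if j = 0 then A₀ else A j)
      (by
        intro j
        by_cases h : j = 0
        · rw [if_pos h]; exact hA₀ind
        · rw [if_neg h]; exact hAind j)
      (by
        intro j j' hjj a ha x hx
        have hj' : j' ≠ 0 := by omega
        rw [if_neg hj'] at hx
        by_cases h : j = 0
        · rw [if_pos h] at ha
          have haW : a ∈ W₀ := hX₀W (hA₀X ha)
          intro hE
          exact haW.2.1 ⟨haW.1, x, ⟨j', hx⟩, hE⟩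
        · rw [if_neg h] at ha
          exact hAcross j j' hjj a ha x hx) k
  -- absorption for the Out side
  obtain ⟨Bstar, hBstar0, hBstarSub, hBstarInd, hBabs⟩ :=
    absorbOut E (fun j => if j = 0 then B₀ else B j)
      (by
        intro j
        by_cases h : j = 0
        · rw [if_pos h]; exact hB₀ind
        · rw [if_neg h]; exact hBind j)
      (by
        intro j j' hjj b hb x hx
        have hj' : j' ≠ 0 := by omega
        rw [if_neg hj'] at hx
        by_cases h : j = 0
        · rw [if_pos h] at hb
          have hbW : b ∈ W₀ := hY₀W (hB₀Y hb)
          intro hE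
          exact hbW.2.2 ⟨hbW.1, hbW.2.1, x, ⟨j', hx⟩, hE⟩
        · rw [if_neg h] at hb
          exact hBcross j j' hjj b hb x hx) k
  have hAstar0' : A₀ ⊆ Astar := by simpa using hAstar0
  have hBstar0' : B₀ ⊆ Bstar := by simpa using hBstar0
  have hAstarV : Astar ⊆ S₁ ∪ X₀ ∪ N₀ := by
    intro v hv
    obtain ⟨j, hjk, hvj⟩ := hAstarSub v hv
    by_cases h : j = 0
    · rw [if_pos h] at hvj
      exact Or.inl (Or.inr (hA₀X hvj))
    · rw [if_neg h] at hvj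
      exact Or.inl (Or.inl (hA j hvj).2)
  have hBstarV : Bstar ⊆ S₂ ∪ Y₀ ∪ M₀ := by
    intro v hv
    obtain ⟨j, hjk, hvj⟩ := hBstarSub v hv
    by_cases h : j = 0
    · rw [if_pos h] at hvj
      exact Or.inl (Or.inr (hB₀Y hvj))
    · rw [if_neg h] at hvj
      exact Or.inl (Or.inl (hB j hvj).2)
  refine ⟨S₁ ∪ X₀ ∪ N₀, S₂ ∪ Y₀ ∪ M₀, ?_, ?_,
    ⟨Astar, hAstarV, hAstarInd, ?_⟩, ⟨Bstar, hBstarV, hBstarInd, ?_⟩⟩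
  -- union is everything
  · apply Set.eq_univ_of_forall
    intro v
    obtain ⟨j, hjk, hvj⟩ := hcov' v
    by_cases h : j = 0
    · subst h
      by_cases hn : v ∈ N₀
      · exact Or.inl (Or.inr hn)
      · by_cases hmm : v ∈ M₀
        · exact Or.inr (Or.inr hmm)
        · have hvW : v ∈ W₀ := ⟨hvj, hn, hmm⟩
          rw [← hXY₀] at hvW
          rcases hvW with h' | h'
          · exact Or.inl (Or.inl (Or.inr h'))
          · exact Or.inr (Or.inl (Or.inr h'))
    · have : v ∈ S₁ ∪ S₂ := (hmemU v).mpr ⟨j, by omega, hjk, hvj⟩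
      rcases this with h' | h'
      · exact Or.inl (Or.inl (Or.inl h'))
      · exact Or.inr (Or.inl (Or.inl h'))
  -- disjointness
  · rw [Set.disjoint_left]
    rintro v ((hv | hv) | hv) hv2
    · rcases hv2 with (h' | h') | h'
      · exact Set.disjoint_left.mp hDisj hv h'
      · exact hP0_not v (hY₀W h').1 (Or.inl hv)
      · exact hP0_not v h'.1 (Or.inl hv)
    · rcases hv2 with (h' | h') | h'
      · exact hP0_not v (hX₀W hv).1 (Or.inr h')
      · exact Set.disjoint_left.mp hXY₀disj hv h'
      · exact (hX₀W hv).2.2 h'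
    · rcases hv2 with (h' | h') | h'
      · exact hP0_not v hv.1 (Or.inr h')
      · exact (hY₀W h').2.1 hv
      · exact h'.2.1 hv
  -- In coverage at radius m+1
  · rintro v ((hv | hv) | hv)
    · obtain ⟨j, a, ha, hp⟩ := hAcov v hv
      obtain ⟨hj1, hjk⟩ := hAbound j a ha
      have ha' : a ∈ (fun j => if j = 0 then A₀ else A j) j := by
        dsimp only
        rw [if_neg (by omega)]
        exact ha
      rcases hAabs j hjk a ha' with hin | ⟨x, hx, hax⟩
      · exact ⟨a, hin, pathLeIn_le (by omega)
          (pathLeIn_mono (fun u hu => Or.inl (Or.inl hu)) hp)⟩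
      · exact ⟨x, hx, pathLeIn_snoc
          (pathLeIn_mono (fun u hu => Or.inl (Or.inl hu)) hp) (hAstarV hx) hax⟩
    · obtain ⟨a, ha, hp⟩ := hA₀cov v hv
      exact ⟨a, hAstar0' ha, pathLeIn_mono (fun u hu => Or.inl (Or.inr hu)) hp⟩
    · have hv' : v ∈ N₀ := hv
      obtain ⟨hvP, a, ⟨j, haj⟩, hE⟩ := hv
      obtain ⟨hj1, hjk⟩ := hAbound j a haj
      have ha' : a ∈ (fun j => if j = 0 then A₀ else A j) j := by
        dsimp only
        rw [if_neg (by omega)]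
        exact haj
      rcases hAabs j hjk a ha' with hin | ⟨x, hx, hax⟩
      · exact ⟨a, hin, pathLeIn_single (show v ∈ S₁ ∪ X₀ ∪ N₀ from Or.inr hv')
          (show a ∈ S₁ ∪ X₀ ∪ N₀ from Or.inl (Or.inl (hA j haj).2)) hE (by omega)⟩
      · exact ⟨x, hx, pathLeIn_two (show v ∈ S₁ ∪ X₀ ∪ N₀ from Or.inr hv')
          (show a ∈ S₁ ∪ X₀ ∪ N₀ from Or.inl (Or.inl (hA j haj).2))
          (hAstarV hx) hE hax (by omega)⟩
  -- Out coverage at radius ℓ+1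
  · rintro v ((hv | hv) | hv)
    · obtain ⟨j, b, hb, hp⟩ := hBcov v hv
      obtain ⟨hj1, hjk⟩ := hBbound j b hb
      have hb' : b ∈ (fun j => if j = 0 then B₀ else B j) j := by
        dsimp only
        rw [if_neg (by omega)]
        exact hb
      rcases hBabs j hjk b hb' with hin | ⟨x, hx, hxb⟩
      · exact ⟨b, hin, pathLeIn_le (by omega)
          (pathLeIn_mono (fun u hu => Or.inl (Or.inl hu)) hp)⟩
      · exact ⟨x, hx, pathLeIn_cons (hBstarV hx) hxb
          (pathLeIn_mono (fun u hu => Or.inl (Or.inl hu)) hp)⟩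
    · obtain ⟨b, hb, hp⟩ := hB₀cov v hv
      exact ⟨b, hBstar0' hb, pathLeIn_mono (fun u hu => Or.inl (Or.inr hu)) hp⟩
    · have hv' : v ∈ M₀ := hv
      obtain ⟨hvP, hvN, b, ⟨j, hbj⟩, hE⟩ := hv
      obtain ⟨hj1, hjk⟩ := hBbound j b hbj
      have hb' : b ∈ (fun j => if j = 0 then B₀ else B j) j := by
        dsimp only
        rw [if_neg (by omega)]
        exact hbj
      rcases hBabs j hjk b hb' with hin | ⟨x, hx, hxb⟩
      · exact ⟨b, hin, pathLeIn_single (show b ∈ S₂ ∪ Y₀ ∪ M₀ from Or.inl (Or.inl (hB j hbj).2))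
          (show v ∈ S₂ ∪ Y₀ ∪ M₀ from Or.inr hv') hE (by omega)⟩
      · exact ⟨x, hx, pathLeIn_two (hBstarV hx)
          (show b ∈ S₂ ∪ Y₀ ∪ M₀ from Or.inl (Or.inl (hB j hbj).2))
          (show v ∈ S₂ ∪ Y₀ ∪ M₀ from Or.inr hv') hxb hE (by omega)⟩
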